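/- Let R = F2[x1^{±1},...,xd^{±1}] with involution f ↦ f̄. Let M be an N×N matrix over R that is Hermitian (M = M†, where † is transpose composed with entrywise involution) and such that for every j the diagonal entry M_{jj} has zero constant coefficient. Then there exists an N×N matrix T over R with T + T† = M. -/

import Mathlib

open scoped Classical


/-- The Laurent polynomial ring `F₂[x₁^{±1},…,x_d^{±1}]`, realized as the group algebra
of `ℤ^d` over `F₂`. -/
abbrev R (d : ℕ) : Type := AddMonoidAlgebra (ZMod 2) (Fin d → ℤ)

/-- The involution (antipode) `f ↦ f̄` induced by `xᵢ ↦ xᵢ⁻¹`, i.e. negation of exponents. -/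
noncomputable def bar (d : ℕ) : R d ≃ₐ[ZMod 2] R d :=
  AddMonoidAlgebra.domCongr (ZMod 2) (ZMod 2) (AddEquiv.neg (Fin d → ℤ))

/-- The matrix adjoint `A†`: transpose with the involution applied entrywise. -/
noncomputable def adj {d : ℕ} {m n : Type*} (A : Matrix m n (R d)) : Matrix n m (R d) :=
  (A.map (bar d)).transpose

noncomputable abbrev lexOG (d : ℕ) : LinearOrder (Lex (Fin d → ℤ)) :=
  haveI : WellFoundedLT (Fin d) := Finite.to_wellFoundedLT
  inferInstance

lemma bar_apply (d : ℕ) (f : R d) (a : Fin d → ℤ) : (bar d f).coeff a = f.coeff (-a) := by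
  simp [bar, AddMonoidAlgebra.coeff_domCongr]

/-- "half" of a bar-invariant element: keep only lexicographically positive exponents. -/
noncomputable def halfOf (d : ℕ) (f : R d) : R d :=
  letI := lexOG d
  AddMonoidAlgebra.ofCoeff (Finsupp.filter (fun a => 0 < toLex a) f.coeff)

lemma half_spec (d : ℕ) (f : R d) (hf : bar d f = f) (h0 : f.coeff 0 = 0) :
    halfOf d f + bar d (halfOf d f) = f := by
  letI := lexOG d
  letI : LinearOrder (Lex (Fin d → ℤ)) := lexOG d
  ext a
  have hba : ∀ b : Fin d → ℤ, f.coeff (-b) = f.coeff b := by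
    intro b; conv_rhs => rw [← hf]
    exact (bar_apply d f b).symm
  simp only [halfOf]
  rw [AddMonoidAlgebra.coeff_add, Finsupp.add_apply, bar_apply, AddMonoidAlgebra.coeff_ofCoeff, Finsupp.filter_apply, Finsupp.filter_apply]
  have hneg : toLex (-a) = -(toLex a) := rfl
  rcases @lt_trichotomy (Lex (Fin d → ℤ)) _ 0 (toLex a) with h | h | h
  · have h' : ¬ (0 : Lex (Fin d → ℤ)) < toLex (-a) := by
      rw [hneg]; exact not_lt.mpr (le_of_lt (neg_neg_iff_pos.mpr h))
    rw [if_pos (by exact h), if_neg h', add_zero]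
  · have ha : a = 0 := toLex.injective h.symm
    subst ha
    rw [if_neg (by rw [← h]; exact lt_irrefl _), if_neg (by rw [neg_zero, ← h]; exact lt_irrefl _),
      add_zero, h0]
  · have h' : (0 : Lex (Fin d → ℤ)) < toLex (-a) := by rw [hneg]; exact neg_pos.mpr h
    rw [if_neg (by exact not_lt.mpr (le_of_lt h)), if_pos h', zero_add, hba]

/-- A Hermitian matrix over the Laurent polynomial ring whose diagonal entries have zero
constant coefficient can be written as `T + T†`. -/
theorem stmt_1 (d N : ℕ) (M : Matrix (Fin N) (Fin N) (R d))
    (hherm : adj M = M) (hdiag : ∀ j : Fin N, (M j j).coeff 0 = 0) :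
    ∃ T : Matrix (Fin N) (Fin N) (R d), T + adj T = M := by
  refine ⟨Matrix.of fun i j =>
    if i < j then M i j else if i = j then halfOf d (M i i) else 0, ?_⟩
  refine Matrix.ext fun i j => ?_
  have hadj : ∀ i j, bar d (M j i) = M i j := by
    intro i j
    conv_rhs => rw [← hherm]
    rfl
  simp only [Matrix.add_apply, adj, Matrix.transpose_apply, Matrix.map_apply, Matrix.of_apply]
  rcases lt_trichotomy i j with h | h | h
  · rw [if_pos h, if_neg (not_lt.mpr h.le), if_neg (ne_of_gt h)]
    simp
  · subst h
    rw [if_neg (lt_irrefl i), if_pos rfl]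
    exact half_spec d (M i i) (hadj i i) (hdiag i)
  · rw [if_neg (not_lt.mpr h.le), if_neg (ne_of_gt h), if_pos h]
    rw [hadj]; simp
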